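/- arXiv:2010.00449 — 4 statements merged into one kernel-verified Lean document; each statement's English description precedes it below -/
import Mathlib

section
/- Let T_c > 0, let 0 < m ≤ 1, and let F : ℝ → ℝ be differentiable on (0, ∞) and continuous at 0. Let T > 0 and let V : [0, T] → ℝ be continuous with V(t) > 0 for all t ∈ [0, T), V(T) = 0, and suppose V is differentiable on [0, T) with V′(t) = −(1/(m·T_c))·(F′(V(t)^m))⁻¹·V(t)^(1−m) for all t ∈ [0, T), where F′(V(t)^m) ≠ 0. Then the settling time satisfies T = T_c·(F(V(0)^m) − F(0)). If moreover F(0) = 0 and F(y) < 1 for all y ≥ 0, then T < T_c, so the system converges to zero within the predefined time T_c. -/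
/-- If `V` is continuous on `[0, T]`, positive on `[0, T)`, vanishes at `T`,
and satisfies `V'(t) = −(1/(m·T_c))·(F'(V(t)^m))⁻¹·V(t)^(1−m)` on `[0, T)` (with `F`
differentiable on `(0,∞)`, continuous at `0`, and `F'(V(t)^m) ≠ 0`), then the settling
time satisfies `T = T_c·(F(V(0)^m) − F(0))`; and if moreover `F(0) = 0` and `F(y) < 1`
for all `y ≥ 0`, then `T < T_c`. -/
theorem stmt_5 (Tc m : ℝ) (hTc : 0 < Tc) (hm0 : 0 < m) (hm1 : m ≤ 1)
    (F : ℝ → ℝ) (hF : DifferentiableOn ℝ F (Set.Ioi 0)) (hFc : ContinuousAt F 0)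
    (T : ℝ) (hT : 0 < T) (V : ℝ → ℝ)
    (hVc : ContinuousOn V (Set.Icc 0 T))
    (hVpos : ∀ t ∈ Set.Ico (0 : ℝ) T, 0 < V t)
    (hVT : V T = 0)
    (hF' : ∀ t ∈ Set.Ico (0 : ℝ) T, deriv F (V t ^ m) ≠ 0)
    (hV : ∀ t ∈ Set.Ico (0 : ℝ) T, HasDerivWithinAt V
      (-(1 / (m * Tc)) * (deriv F (V t ^ m))⁻¹ * V t ^ (1 - m)) (Set.Ico (0 : ℝ) T) t) :
    T = Tc * (F (V 0 ^ m) - F 0) ∧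
    (F 0 = 0 → (∀ y : ℝ, 0 ≤ y → F y < 1) → T < Tc) := by
  set g : ℝ → ℝ := fun t => Tc * F (V t ^ m) + t with hg
  -- nonnegativity of V on Icc
  have hVnn : ∀ t ∈ Set.Icc (0 : ℝ) T, 0 ≤ V t := by
    intro t ht
    rcases eq_or_lt_of_le ht.2 with h | h
    · rw [h, hVT]
    · exact (hVpos t ⟨ht.1, h⟩).le
  -- continuity of F on Ici 0
  have hFcont : ContinuousOn F (Set.Ici 0) := by
    intro x hx
    rcases eq_or_lt_of_le (Set.mem_Ici.mp hx) with h | h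
    · rw [← h]; exact hFc.continuousWithinAt
    · exact ((hF.differentiableAt (Ioi_mem_nhds h)).continuousAt).continuousWithinAt
  -- continuity of g on Icc 0 T
  have hgc : ContinuousOn g (Set.Icc 0 T) := by
    apply ContinuousOn.add _ continuousOn_id
    apply ContinuousOn.mul continuousOn_const
    apply hFcont.comp (hVc.rpow_const (fun t ht => Or.inr hm0.le))
    intro t ht
    exact Real.rpow_nonneg (hVnn t ht) m
  -- derivative of g is zero on Ico 0 T (within Ici x)
  have hgd : ∀ x ∈ Set.Ico (0 : ℝ) T, HasDerivWithinAt g 0 (Set.Ici x) x := by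
    intro x hx
    have hVx := hVpos x hx
    have hVxm : (0 : ℝ) < V x ^ m := Real.rpow_pos_of_pos hVx m
    have hFd : HasDerivAt F (deriv F (V x ^ m)) (V x ^ m) :=
      (hF.differentiableAt (Ioi_mem_nhds hVxm)).hasDerivAt
    have h1 : HasDerivWithinAt (fun t => V t ^ m)
        ((-(1 / (m * Tc)) * (deriv F (V x ^ m))⁻¹ * V x ^ (1 - m)) * m * V x ^ (m - 1))
        (Set.Ico 0 T) x :=
      (hV x hx).rpow_const (Or.inl hVx.ne')
    have h2 : HasDerivWithinAt (fun t => F (V t ^ m))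
        (deriv F (V x ^ m) *
          ((-(1 / (m * Tc)) * (deriv F (V x ^ m))⁻¹ * V x ^ (1 - m)) * m * V x ^ (m - 1)))
        (Set.Ico 0 T) x := hFd.comp_hasDerivWithinAt x h1
    have h3 : HasDerivWithinAt g
        (Tc * (deriv F (V x ^ m) *
          ((-(1 / (m * Tc)) * (deriv F (V x ^ m))⁻¹ * V x ^ (1 - m)) * m * V x ^ (m - 1))) + 1)
        (Set.Ico 0 T) x := (h2.const_mul Tc).add (hasDerivWithinAt_id x _)
    have hval : Tc * (deriv F (V x ^ m) *
          ((-(1 / (m * Tc)) * (deriv F (V x ^ m))⁻¹ * V x ^ (1 - m)) * m * V x ^ (m - 1))) + 1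
        = 0 := by
      have hpow : V x ^ (1 - m) * V x ^ (m - 1) = 1 := by
        rw [← Real.rpow_add hVx]
        norm_num
      have hFne := hF' x hx
      have hstep : Tc * (deriv F (V x ^ m) *
          ((-(1 / (m * Tc)) * (deriv F (V x ^ m))⁻¹ * V x ^ (1 - m)) * m * V x ^ (m - 1)))
          = -(Tc * (1 / (m * Tc)) * m) * (deriv F (V x ^ m) * (deriv F (V x ^ m))⁻¹) *
            (V x ^ (1 - m) * V x ^ (m - 1)) := by ring
      rw [hstep, hpow, mul_inv_cancel₀ hFne]
      field_simp
      ring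
    rw [hval] at h3
    apply h3.mono_of_mem_nhdsWithin
    apply Filter.mem_of_superset
      (Filter.inter_mem self_mem_nhdsWithin (mem_nhdsWithin_of_mem_nhds (Iio_mem_nhds hx.2)))
    rintro y ⟨hy1, hy2⟩
    exact ⟨le_trans hx.1 hy1, hy2⟩
  have hconst : g T = g 0 :=
    constant_of_has_deriv_right_zero hgc hgd T ⟨hT.le, le_refl T⟩
  have hVT0 : V T ^ m = 0 := by rw [hVT, Real.zero_rpow hm0.ne']
  have hTeq : T = Tc * (F (V 0 ^ m) - F 0) := by
    have := hconst
    simp only [hg, hVT0] at this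
    linarith
  refine ⟨hTeq, fun hF0 hF1 => ?_⟩
  have h01 : F (V 0 ^ m) < 1 :=
    hF1 _ (Real.rpow_nonneg (hVpos 0 ⟨le_refl 0, hT⟩).le m)
  rw [hTeq, hF0, sub_zero]
  calc Tc * F (V 0 ^ m) < Tc * 1 := by exact mul_lt_mul_of_pos_left h01 hTc
    _ = Tc := mul_one Tc
end

section
/- Let T_c > 0 and 0 < m < 1. If x : ℝ → ℝ is differentiable at t₀ with x(t₀) < 0 and x′(t₀) = −(1/(m·T_c))·exp(|x(t₀)|^m)·|x(t₀)|^(1−m), then the function t ↦ |x(t)| is differentiable at t₀ with derivative (1/(m·T_c))·exp(|x(t₀)|^m)·|x(t₀)|^(1−m) > 0. Hence along the scalar system ẋ = −(1/(m·T_c))·exp(|x|^m)·|x|^(1−m) the distance to the origin strictly increases for negative states, and the system is not stable for x < 0. -/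
/-- If `x : ℝ → ℝ` is differentiable at `t₀` with `x(t₀) < 0` and
`x'(t₀) = −(1/(m·T_c))·exp(|x(t₀)|^m)·|x(t₀)|^(1−m)`, then `t ↦ |x(t)|` is differentiable
at `t₀` with derivative `(1/(m·T_c))·exp(|x(t₀)|^m)·|x(t₀)|^(1−m)`, which is positive:
the distance to the origin strictly increases for negative states. -/
theorem stmt_6 (Tc m : ℝ) (hTc : 0 < Tc) (hm0 : 0 < m) (hm1 : m < 1)
    (x : ℝ → ℝ) (t₀ : ℝ) (hneg : x t₀ < 0)
    (hx : HasDerivAt x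
      (-(1 / (m * Tc)) * Real.exp (|x t₀| ^ m) * |x t₀| ^ (1 - m)) t₀) :
    HasDerivAt (fun t => |x t|)
      ((1 / (m * Tc)) * Real.exp (|x t₀| ^ m) * |x t₀| ^ (1 - m)) t₀ ∧
    0 < (1 / (m * Tc)) * Real.exp (|x t₀| ^ m) * |x t₀| ^ (1 - m) := by
  constructor
  · have hcont : ContinuousAt x t₀ := hx.continuousAt
    have hev : ∀ᶠ t in nhds t₀, x t < 0 :=
      hcont.eventually_lt continuousAt_const hneg
    have h1 : HasDerivAt (fun t => -x t)
        ((1 / (m * Tc)) * Real.exp (|x t₀| ^ m) * |x t₀| ^ (1 - m)) t₀ := by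
      have := hx.neg
      have h2 : HasDerivAt (fun t => -x t) (-(-(1 / (m * Tc)) * Real.exp (|x t₀| ^ m) * |x t₀| ^ (1 - m))) t₀ := this
      convert h2 using 1; ring
    refine h1.congr_of_eventuallyEq ?_
    filter_upwards [hev] with t ht
    simp [abs_of_neg ht]
  · have h0 : 0 < |x t₀| := abs_pos.mpr hneg.ne
    positivity
end

section
/- Let T_c > 0, let 0 < m ≤ 1, and let F : ℝ → ℝ be differentiable on (0, ∞) with F′ > 0 there, continuous at 0, with F(0) = 0 and F(y) < 1 for all y ≥ 0. Let T > 0 and let s : [0, T] → ℝⁿ be continuous with s(t) ≠ 0 for t ∈ [0, T), s(T) = 0, differentiable on [0, T) with s′(t) = −(1/(m·T_c))·(F′(‖s(t)‖^m))⁻¹·s(t)/‖s(t)‖^m for all t ∈ [0, T). Then the reaching time satisfies T = T_c·F(‖s(0)‖^m), and in particular T < T_c: the sliding variable reaches zero within the predefined time T_c. -/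
open Set

/-- Let `F` be differentiable on `(0, ∞)` with `F' > 0` there, continuous
at `0`, with `F(0) = 0` and `F(y) < 1` for all `y ≥ 0`. If the sliding variable
`s : [0, T] → ℝⁿ` is continuous, nonzero on `[0, T)`, vanishes at `T`, and obeys the
predefined-time reaching law `s'(t) = −(1/(m·T_c))·(F'(‖s(t)‖^m))⁻¹·s(t)/‖s(t)‖^m` on
`[0, T)`, then the reaching time satisfies `T = T_c·F(‖s(0)‖^m)` and `T < T_c`. -/
theorem stmt_14 (n : ℕ) (Tc m : ℝ) (hTc : 0 < Tc) (hm0 : 0 < m) (hm1 : m ≤ 1)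
    (F : ℝ → ℝ) (hF : DifferentiableOn ℝ F (Set.Ioi 0))
    (hF' : ∀ y : ℝ, 0 < y → 0 < deriv F y)
    (hFc : ContinuousAt F 0) (hF0 : F 0 = 0) (hF1 : ∀ y : ℝ, 0 ≤ y → F y < 1)
    (T : ℝ) (hT : 0 < T) (s : ℝ → EuclideanSpace ℝ (Fin n))
    (hsc : ContinuousOn s (Set.Icc 0 T))
    (hsne : ∀ t ∈ Set.Ico (0 : ℝ) T, s t ≠ 0)
    (hsT : s T = 0)
    (hs : ∀ t ∈ Set.Ico (0 : ℝ) T, HasDerivWithinAt s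
      ((-(1 / (m * Tc)) * (deriv F (‖s t‖ ^ m))⁻¹ * (‖s t‖ ^ m)⁻¹) • s t)
      (Set.Ico (0 : ℝ) T) t) :
    T = Tc * F (‖s 0‖ ^ m) ∧ T < Tc := by
  have hmne : m ≠ 0 := hm0.ne'
  set H : ℝ → ℝ := fun t => Tc * F (‖s t‖ ^ m) + t with hHdef
  -- derivative of H is zero on [0, T)
  have key : ∀ t ∈ Set.Ico (0 : ℝ) T, HasDerivWithinAt H 0 (Set.Ico (0 : ℝ) T) t := by
    intro t ht
    have hst : s t ≠ 0 := hsne t ht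
    have hnorm : 0 < ‖s t‖ := norm_pos_iff.mpr hst
    have hypos : 0 < ‖s t‖ ^ m := Real.rpow_pos_of_pos hnorm m
    set y : ℝ := ‖s t‖ ^ m with hy
    have hFy : 0 < deriv F y := hF' y hypos
    set c : ℝ := -(1 / (m * Tc)) * (deriv F y)⁻¹ * y⁻¹ with hc
    -- derivative of squared norm
    have hq : HasDerivWithinAt (fun u => (inner ℝ (s u) (s u) : ℝ))
        (2 * c * (inner ℝ (s t) (s t) : ℝ)) (Set.Ico (0 : ℝ) T) t := by
      have h1 := HasDerivWithinAt.inner ℝ (hs t ht) (hs t ht)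
      refine h1.congr_deriv ?_
      rw [real_inner_smul_right, real_inner_smul_left]
      ring
    have hqt : (inner ℝ (s t) (s t) : ℝ) = ‖s t‖ ^ (2:ℝ) := by
      rw [real_inner_self_eq_norm_sq, Real.rpow_two]
    have hsq : ∀ u : ℝ, ((inner ℝ (s u) (s u) : ℝ)) ^ (m / 2) = ‖s u‖ ^ m := by
      intro u
      rw [real_inner_self_eq_norm_sq, ← Real.rpow_two, ← Real.rpow_mul (norm_nonneg _),
        show (2:ℝ) * (m / 2) = m from by ring]
    have hp : HasDerivWithinAt (fun u => ‖s u‖ ^ m)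
        (m * c * y) (Set.Ico (0 : ℝ) T) t := by
      have h2 := hq.rpow_const (p := m / 2) (Or.inl (by rw [hqt]; positivity))
      have h3 : (fun u => (inner ℝ (s u) (s u) : ℝ) ^ (m / 2)) = fun u => ‖s u‖ ^ m := by
        funext u; exact hsq u
      rw [h3] at h2
      convert h2 using 1
      rw [hqt, ← Real.rpow_mul (norm_nonneg _),
        show (2:ℝ) * (m / 2 - 1) = m - 2 from by ring,
        show 2 * c * ‖s t‖ ^ (2:ℝ) * (m / 2) * ‖s t‖ ^ (m - 2)
          = m * c * (‖s t‖ ^ (2:ℝ) * ‖s t‖ ^ (m - 2)) from by ring,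
        ← Real.rpow_add hnorm, show (2:ℝ) + (m - 2) = m from by ring, hy]
    -- derivative of F at y
    have hFd : HasDerivAt F (deriv F y) y :=
      (hF.differentiableAt (isOpen_Ioi.mem_nhds hypos)).hasDerivAt
    have hG : HasDerivWithinAt (fun u => F (‖s u‖ ^ m))
        (deriv F y * (m * c * y)) (Set.Ico (0 : ℝ) T) t :=
      hFd.comp_hasDerivWithinAt t hp
    have hval : deriv F y * (m * c * y) = -(1 / Tc) := by
      rw [hc]; field_simp
    have h0 : Tc * -(1 / Tc) + 1 = 0 := by field_simp; ring
    have hH := (HasDerivWithinAt.const_mul Tc hG).add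
      (hasDerivWithinAt_id t (Set.Ico (0 : ℝ) T))
    rw [hval, h0] at hH
    exact hH
  -- H is continuous on [0, T]
  have hFcont : ContinuousOn F (Set.Ici 0) := by
    intro y hy
    rcases eq_or_lt_of_le (mem_Ici.mp hy) with h | h
    · rw [← h]; exact hFc.continuousWithinAt
    · exact ((hF.differentiableAt (isOpen_Ioi.mem_nhds h)).continuousAt).continuousWithinAt
  have hrm : ContinuousOn (fun u => ‖s u‖ ^ m) (Set.Icc 0 T) := by
    apply ContinuousOn.rpow_const (hsc.norm)
    intro u hu
    right; exact hm0.le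
  have hHcont : ContinuousOn H (Set.Icc 0 T) := by
    exact (continuousOn_const.mul (hFcont.comp hrm
      (fun u hu => Real.rpow_nonneg (norm_nonneg _) m))).add continuousOn_id
  -- H constant on [0, T]
  have hconst : ∀ x ∈ Set.Icc (0:ℝ) T, H x = H 0 := by
    apply constant_of_has_deriv_right_zero hHcont
    intro x hx
    apply (key x hx).mono_of_mem_nhdsWithin
    exact Filter.mem_of_superset (Ico_mem_nhdsGE_of_mem ⟨le_refl x, hx.2⟩)
      (fun u hu => ⟨le_trans hx.1 hu.1, hu.2⟩)
  have hHT : H T = H 0 := hconst T ⟨hT.le, le_refl T⟩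
  have h0T : ‖s T‖ ^ m = 0 := by
    rw [hsT, norm_zero, Real.zero_rpow hmne]
  have hTeq : T = Tc * F (‖s 0‖ ^ m) := by
    have : Tc * F (‖s T‖ ^ m) + T = Tc * F (‖s 0‖ ^ m) + 0 := hHT
    rw [h0T, hF0] at this
    linarith
  refine ⟨hTeq, ?_⟩
  have : F (‖s 0‖ ^ m) < 1 := hF1 _ (Real.rpow_nonneg (norm_nonneg _) m)
  calc T = Tc * F (‖s 0‖ ^ m) := hTeq
    _ < Tc * 1 := by exact (mul_lt_mul_iff_right₀ hTc).mpr this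
    _ = Tc := mul_one Tc
end

section
/- Let T_c > 0, let 0 < m ≤ 1, let F : ℝ → ℝ, and let d ∈ ℝⁿ. Let s : ℝ → ℝⁿ be differentiable at t₀ with s(t₀) ≠ 0 and F′(‖s(t₀)‖^m) > 0, and suppose s′(t₀) = −(1/(m·T_c))·(F′(‖s(t₀)‖^m))⁻¹·s(t₀)/‖s(t₀)‖^m + d − ‖d‖·sign(s(t₀)), where sign is applied componentwise. Then t ↦ ‖s(t)‖ is differentiable at t₀ and its derivative satisfies (d/dt)‖s(t)‖|_{t=t₀} ≤ −(1/(m·T_c))·(F′(‖s(t₀)‖^m))⁻¹·‖s(t₀)‖^(1−m) < 0. Hence under the controller with the exact robust compensation term, the Lyapunov function ‖s‖ decreases at the predefined-time rate despite the disturbance d. -/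
/-- The componentwise sign vector of `s ∈ ℝⁿ`. -/
noncomputable def signVec {n : ℕ} (s : EuclideanSpace ℝ (Fin n)) :
    EuclideanSpace ℝ (Fin n) :=
  WithLp.toLp 2 (fun i => Real.sign (s i))

lemma norm_le_inner_signVec {n : ℕ} (x : EuclideanSpace ℝ (Fin n)) :
    ‖x‖ ≤ inner ℝ x (signVec x) := by
  have hinner : (inner ℝ x (signVec x) : ℝ) = ∑ i, |x i| := by
    rw [PiLp.inner_apply]
    refine Finset.sum_congr rfl fun i _ => ?_
    simp only [RCLike.inner_apply, conj_trivial, signVec, PiLp.toLp_apply]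
    rcases lt_trichotomy (x i) 0 with h | h | h
    · rw [Real.sign_of_neg h, abs_of_neg h]; ring
    · simp [h]
    · rw [Real.sign_of_pos h, abs_of_pos h]; ring
  rw [hinner, EuclideanSpace.norm_eq]
  have h1 : ∑ i, x i ^ 2 ≤ (∑ i, |x i|) ^ 2 := by
    calc ∑ i, x i ^ 2 = ∑ i, |x i| ^ 2 := by simp [sq_abs]
    _ ≤ (∑ i, |x i|) ^ 2 :=
        Finset.sum_sq_le_sq_sum_of_nonneg fun i _ => abs_nonneg _
  calc Real.sqrt (∑ i, ‖x i‖ ^ 2) = Real.sqrt (∑ i, x i ^ 2) := by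
        simp [Real.norm_eq_abs, sq_abs]
  _ ≤ Real.sqrt ((∑ i, |x i|) ^ 2) := Real.sqrt_le_sqrt h1
  _ = ∑ i, |x i| := Real.sqrt_sq (Finset.sum_nonneg fun i _ => abs_nonneg _)

/-- If the sliding variable `s` is differentiable at `t₀` with `s(t₀) ≠ 0`,
`F'(‖s(t₀)‖^m) > 0`, and closed-loop dynamics
`s'(t₀) = −(1/(m·T_c))·(F'(‖s(t₀)‖^m))⁻¹·s(t₀)/‖s(t₀)‖^m + d − ‖d‖·sign(s(t₀))`
(with componentwise sign and matched disturbance `d`), then `t ↦ ‖s(t)‖` is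
differentiable at `t₀` with derivative at most
`−(1/(m·T_c))·(F'(‖s(t₀)‖^m))⁻¹·‖s(t₀)‖^(1−m) < 0`: the Lyapunov function `‖s‖`
decreases at the predefined-time rate despite the disturbance. -/
theorem stmt_16 (n : ℕ) (Tc m : ℝ) (hTc : 0 < Tc) (hm0 : 0 < m) (hm1 : m ≤ 1)
    (F : ℝ → ℝ) (d : EuclideanSpace ℝ (Fin n))
    (s : ℝ → EuclideanSpace ℝ (Fin n)) (t₀ : ℝ)
    (hs0 : s t₀ ≠ 0)
    (hF' : 0 < deriv F (‖s t₀‖ ^ m))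
    (hs : HasDerivAt s
      ((-(1 / (m * Tc)) * (deriv F (‖s t₀‖ ^ m))⁻¹ * (‖s t₀‖ ^ m)⁻¹) • s t₀
        + d - ‖d‖ • signVec (s t₀)) t₀) :
    DifferentiableAt ℝ (fun t => ‖s t‖) t₀ ∧
    deriv (fun t => ‖s t‖) t₀
      ≤ -(1 / (m * Tc)) * (deriv F (‖s t₀‖ ^ m))⁻¹ * ‖s t₀‖ ^ (1 - m) ∧
    -(1 / (m * Tc)) * (deriv F (‖s t₀‖ ^ m))⁻¹ * ‖s t₀‖ ^ (1 - m) < 0 := by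
  set x₀ := s t₀ with hx₀
  set c : ℝ := -(1 / (m * Tc)) * (deriv F (‖x₀‖ ^ m))⁻¹ * (‖x₀‖ ^ m)⁻¹ with hc
  set v : EuclideanSpace ℝ (Fin n) := c • x₀ + d - ‖d‖ • signVec x₀ with hv
  have hx : (0 : ℝ) < ‖x₀‖ := norm_pos_iff.2 hs0
  -- derivative of the norm
  have h1 : HasDerivAt (fun t => ‖s t‖ ^ 2) (2 * inner ℝ x₀ v) t₀ := hs.norm_sq
  have h2 : HasDerivAt (fun t => Real.sqrt (‖s t‖ ^ 2))
      (2 * inner ℝ x₀ v / (2 * Real.sqrt (‖s t₀‖ ^ 2))) t₀ :=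
    h1.sqrt (by positivity)
  have heq : (fun t => Real.sqrt (‖s t‖ ^ 2)) = fun t => ‖s t‖ := by
    funext t; exact Real.sqrt_sq (norm_nonneg _)
  have hsq : Real.sqrt (‖x₀‖ ^ 2) = ‖x₀‖ := Real.sqrt_sq (norm_nonneg _)
  have hD : HasDerivAt (fun t => ‖s t‖) ((inner ℝ x₀ v : ℝ) / ‖x₀‖) t₀ := by
    have := h2
    rw [heq, ← hx₀, hsq] at this
    convert this using 1
    field_simp
  -- bound the inner product
  have hiv : (inner ℝ x₀ v : ℝ) ≤ c * ‖x₀‖ ^ 2 := by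
    have hexp : (inner ℝ x₀ v : ℝ)
        = c * ‖x₀‖ ^ 2 + inner ℝ x₀ d - ‖d‖ * inner ℝ x₀ (signVec x₀) := by
      rw [hv, inner_sub_right, inner_add_right, real_inner_smul_right,
        real_inner_smul_right, real_inner_self_eq_norm_sq]
    rw [hexp]
    have h3 : (inner ℝ x₀ d : ℝ) ≤ ‖x₀‖ * ‖d‖ := real_inner_le_norm x₀ d
    have h4 : ‖x₀‖ * ‖d‖ ≤ ‖d‖ * inner ℝ x₀ (signVec x₀) := by
      rw [mul_comm]
      exact mul_le_mul_of_nonneg_left (norm_le_inner_signVec x₀) (norm_nonneg d)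
    linarith
  have hdiv : (inner ℝ x₀ v : ℝ) / ‖x₀‖ ≤ c * ‖x₀‖ := by
    rw [div_le_iff₀ hx]
    calc (inner ℝ x₀ v : ℝ) ≤ c * ‖x₀‖ ^ 2 := hiv
    _ = c * ‖x₀‖ * ‖x₀‖ := by ring
  have hrw : c * ‖x₀‖
      = -(1 / (m * Tc)) * (deriv F (‖x₀‖ ^ m))⁻¹ * ‖x₀‖ ^ (1 - m) := by
    rw [hc, Real.rpow_sub hx, Real.rpow_one]
    field_simp
  have hneg : -(1 / (m * Tc)) * (deriv F (‖x₀‖ ^ m))⁻¹ * ‖x₀‖ ^ (1 - m) < 0 := by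
    have h5 : (0 : ℝ) < 1 / (m * Tc) := by positivity
    have h6 : (0 : ℝ) < (deriv F (‖x₀‖ ^ m))⁻¹ := by positivity
    have h7 : (0 : ℝ) < ‖x₀‖ ^ (1 - m) := Real.rpow_pos_of_pos hx _
    nlinarith [mul_pos (mul_pos h5 h6) h7]
  refine ⟨hD.differentiableAt, ?_, hneg⟩
  rw [hD.deriv]
  exact hrw ▸ hdiv
end
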